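/- Let R be a commutative ring and let A be a symmetric n×n matrix over R all of whose rows sum to zero, i.e. Aᵀ = A and A.mulVec (fun _ => 1) = 0. Then all entries of the adjugate matrix of A are equal: there exists c ∈ R such that adjugate A = c • J, where J is the n×n matrix all of whose entries are 1. Equivalently, all signed (n−1)×(n−1) cofactors of A coincide, so that the (n−1)×(n−1) minor determinant of A is independent (up to the cofactor sign) of the choice of deleted row and column. -/

import Mathlib

open Matrix

private lemma det_updateRow_finset_sum {R : Type*} [CommRing R] {n : ℕ} {ι : Type*}
    (M : Matrix (Fin n) (Fin n) R) (k : Fin n) (s : Finset ι) (f : ι → (Fin n → R)) :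
    (M.updateRow k (∑ r ∈ s, f r)).det = ∑ r ∈ s, (M.updateRow k (f r)).det := by
  classical
  induction s using Finset.induction_on with
  | empty =>
      simp only [Finset.sum_empty]
      exact Matrix.det_eq_zero_of_row_eq_zero k (by simp)
  | insert _ _ hk ih =>
      rw [Finset.sum_insert hk, Matrix.det_updateRow_add, ih, Finset.sum_insert hk]

private lemma adjugate_row_const {R : Type*} [CommRing R] {n : ℕ}
    (A : Matrix (Fin n) (Fin n) R) (hcol : ∑ r, A r = 0) (i j k : Fin n) :
    A.adjugate i j = A.adjugate i k := by
  classical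
  rcases eq_or_ne j k with rfl | hjk
  · rfl
  rw [Matrix.adjugate_apply, Matrix.adjugate_apply]
  set v : Fin n → R := Pi.single i 1 with hv
  set Mj := A.updateRow j v with hMj
  set Mk := A.updateRow k v with hMk
  have hAk : A k = ∑ r ∈ Finset.univ.erase k, (-1 : R) • A r := by
    have := Finset.add_sum_erase Finset.univ A (Finset.mem_univ k)
    rw [hcol] at this
    funext c
    have := congr_fun this c
    simp only [Pi.zero_apply, Pi.add_apply, Finset.sum_apply] at this
    simp only [Finset.sum_apply, Pi.smul_apply, neg_one_smul, Pi.neg_apply]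
    rw [Finset.sum_neg_distrib]
    have e : (∑ x ∈ Finset.univ.erase k, A x) c = ∑ x ∈ Finset.univ.erase k, A x c :=
      Finset.sum_apply c _ (fun x => (A x : Fin n → R))
    linear_combination this - e
  have h1 : Mj.det = (Mj.updateRow k (∑ r ∈ Finset.univ.erase k, (-1 : R) • A r)).det := by
    rw [← hAk]
    have : Mj k = A k := Matrix.updateRow_ne (Ne.symm hjk)
    rw [← this, Matrix.updateRow_eq_self]
  rw [h1, det_updateRow_finset_sum]
  have h2 : ∀ r ∈ Finset.univ.erase k,
      (Mj.updateRow k ((-1 : R) • A r)).det =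
        if r = j then -(Mj.updateRow k (A j)).det else 0 := by
    intro r hr
    have hrk : r ≠ k := Finset.ne_of_mem_erase hr
    by_cases hrj : r = j
    · subst hrj
      rw [Matrix.det_updateRow_smul]
      simp
    · have : (-1 : R) • A r = (-1 : R) • Mj r := by
        rw [hMj, Matrix.updateRow_ne hrj]
      rw [this, Matrix.det_updateRow_smul, Matrix.det_updateRow_eq_zero hrk, mul_zero,
        if_neg hrj]
  rw [Finset.sum_congr rfl h2, Finset.sum_ite_eq' _ j,
    if_pos (Finset.mem_erase.mpr ⟨hjk, Finset.mem_univ j⟩)]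
  have h3 : Mj.updateRow k (A j) = Mk.submatrix (Equiv.swap j k) id := by
    funext r c
    simp only [Matrix.submatrix_apply, id, hMj, hMk, Matrix.updateRow_apply]
    rcases eq_or_ne r j with rfl | hrj
    · simp [hjk, Equiv.swap_apply_left]
    rcases eq_or_ne r k with rfl | hrk
    · simp [hjk, Ne.symm hjk, Equiv.swap_apply_right, hrj]
    · simp [hrj, hrk, Equiv.swap_apply_of_ne_of_ne hrj hrk]
  rw [h3, Matrix.det_permute, Equiv.Perm.sign_swap hjk]
  simp

theorem stmt_7 {R : Type*} [CommRing R] {n : ℕ}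
    (A : Matrix (Fin n) (Fin n) R)
    (hsym : Aᵀ = A)
    (hsum : A.mulVec (fun _ => (1 : R)) = 0) :
    ∃ c : R, A.adjugate = c • Matrix.of (fun _ _ : Fin n => (1 : R)) := by
  classical
  have hrow : ∀ i, ∑ j, A i j = 0 := by
    intro i
    have := congr_fun hsum i
    simpa [Matrix.mulVec, dotProduct] using this
  have hcol : ∑ r, A r = 0 := by
    funext c
    have : ∑ r, A r c = ∑ r, A c r := by
      refine Finset.sum_congr rfl fun r _ => ?_
      conv_lhs => rw [← hsym]
      exact Matrix.transpose_apply A r c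
    simp only [Finset.sum_apply, Pi.zero_apply]
    refine (Finset.sum_apply c Finset.univ (fun r => (A r : Fin n → R))).trans ?_
    rw [this, hrow c]
  have hadjsym : (A.adjugate)ᵀ = A.adjugate := by
    rw [Matrix.adjugate_transpose, hsym]
  cases n with
  | zero => exact ⟨0, by ext i j; exact i.elim0⟩
  | succ m =>
      refine ⟨A.adjugate 0 0, ?_⟩
      ext i j
      have h1 : A.adjugate i j = A.adjugate i 0 := adjugate_row_const A hcol i j 0
      have h2 : A.adjugate i 0 = A.adjugate 0 i := by
        have h := congr_fun (congr_fun hadjsym i) 0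
        rw [Matrix.transpose_apply] at h
        exact h.symm
      have h3 : A.adjugate 0 i = A.adjugate 0 0 := adjugate_row_const A hcol 0 i 0
      simp [h1, h2, h3]
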